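/- arXiv:1811.06737 — 2 statements merged into one kernel-verified Lean document; each statement's English description precedes it below -/
import Mathlib

section
/- The set of Hamming weights occurring among codewords of L_k^+ equals {6i : i ∈ ℕ, 6i ≤ 3k} ∪ {k + 2i + 1 : i ∈ ℕ, 2i + 1 ≤ k}. -/
def G (k : ℕ) : Matrix (Fin k) (Fin k) (ZMod 2) := fun i j => if i = j then 0 else 1

lemma two_cases (a : ZMod 2) : a = 0 ∨ a = 1 := by revert a; decide

lemma cast_even {n : ℕ} (h : Even n) : ((n:ℕ) : ZMod 2) = 0 := by
  obtain ⟨c, rfl⟩ := h; push_cast; ring_nf; rw [show ((2:ZMod 2)) = 0 by decide]; ring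

lemma cast_odd {n : ℕ} (h : ¬ Even n) : ((n:ℕ) : ZMod 2) = 1 := by
  obtain ⟨c, rfl⟩ := Nat.odd_iff.mpr (Nat.not_even_iff.mp h)
  push_cast; rw [show ((2:ZMod 2)) = 0 by decide]; ring

lemma hn_cast {k : ℕ} (m : Fin k → ZMod 2) : ((hammingNorm m : ℕ) : ZMod 2) = ∑ i, m i := by
  rw [hammingNorm, ← Finset.sum_filter_ne_zero Finset.univ, Finset.card_eq_sum_ones]
  push_cast
  refine Finset.sum_congr rfl fun i hi => ?_
  have h : m i ≠ 0 := (Finset.mem_filter.mp hi).2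
  rcases two_cases (m i) with h' | h' <;> simp [h'] at h ⊢

lemma vecMul_G {k : ℕ} (m : Fin k → ZMod 2) (j : Fin k) :
    Matrix.vecMul m (G k) j = ((hammingNorm m : ℕ) : ZMod 2) + m j := by
  rw [hn_cast]
  simp only [Matrix.vecMul, dotProduct, G, mul_ite, mul_zero, mul_one]
  have h : ∀ x, (if x = j then (0:ZMod 2) else m x) = m x + (if x = j then m x else 0) := by
    intro x
    split
    · rw [CharTwo.add_self_eq_zero]
    · simp
  simp only [h]
  rw [Finset.sum_add_distrib, Finset.sum_ite_eq' Finset.univ j m]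
  simp

lemma hn_le {k : ℕ} (m : Fin k → ZMod 2) : hammingNorm m ≤ k := by
  exact (Finset.card_filter_le _ _).trans (by simp)

lemma hn_ind {k t : ℕ} (ht : t ≤ k) :
    hammingNorm (fun j : Fin k => if (j : ℕ) < t then (1 : ZMod 2) else 0) = t := by
  rw [hammingNorm]
  have h1 : (Finset.univ.filter fun j : Fin k => (if (j:ℕ) < t then (1:ZMod 2) else 0) ≠ 0)
      = Finset.univ.filter fun j : Fin k => (j:ℕ) < t := by
    ext j; simp only [Finset.mem_filter, Finset.mem_univ, true_and]; split <;> simp_all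
  have himg : (Finset.univ.filter fun j : Fin k => (j:ℕ) < t).image Fin.val = Finset.range t := by
    ext n
    simp only [Finset.mem_image, Finset.mem_filter, Finset.mem_univ, true_and, Finset.mem_range]
    constructor
    · rintro ⟨j, hj, rfl⟩; exact hj
    · intro hn; exact ⟨⟨n, lt_of_lt_of_le hn ht⟩, hn, rfl⟩
  rw [h1, ← Finset.card_image_of_injective _ Fin.val_injective, himg, Finset.card_range]

lemma hn_even {k : ℕ} (m : Fin k → ZMod 2) (h : Even (hammingNorm m)) :
    hammingNorm (Matrix.vecMul m (G k)) = hammingNorm m := by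
  have : Matrix.vecMul m (G k) = m := by
    funext j
    rw [vecMul_G, cast_even h, zero_add]
  rw [this]

lemma hn_odd {k : ℕ} (m : Fin k → ZMod 2) (h : ¬ Even (hammingNorm m)) :
    hammingNorm (Matrix.vecMul m (G k)) = k - hammingNorm m := by
  have hcast := cast_odd h
  have h1 : (Finset.univ.filter fun j : Fin k => Matrix.vecMul m (G k) j ≠ 0)
      = Finset.univ.filter fun j : Fin k => ¬ (m j ≠ 0) := by
    ext j
    simp only [Finset.mem_filter, Finset.mem_univ, true_and, vecMul_G, hcast]
    rcases two_cases (m j) with h' | h' <;> simp [h'] <;> decide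
  rw [hammingNorm, h1, Finset.filter_not, Finset.card_sdiff_of_subset (Finset.filter_subset _ _)]
  simp [hammingNorm]

theorem stmt15 (k : ℕ) :
    {w : ℕ | ∃ m : Fin k → ZMod 2,
        w = hammingNorm m + hammingNorm (Matrix.vecMul m (G k)) + hammingNorm m}
      = {w : ℕ | ∃ i : ℕ, w = 6 * i ∧ 6 * i ≤ 3 * k}
        ∪ {w : ℕ | ∃ i : ℕ, w = k + 2 * i + 1 ∧ 2 * i + 1 ≤ k} := by
  ext w
  simp only [Set.mem_setOf_eq, Set.mem_union]
  constructor
  · rintro ⟨m, rfl⟩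
    have hle := hn_le m
    by_cases h : Even (hammingNorm m)
    · left
      obtain ⟨c, hc⟩ := h
      exact ⟨c, by rw [hn_even m ⟨c, hc⟩]; omega, by omega⟩
    · right
      obtain ⟨c, hc⟩ := Nat.odd_iff.mpr (Nat.not_even_iff.mp h)
      exact ⟨c, by rw [hn_odd m h]; omega, by omega⟩
  · rintro (⟨i, rfl, hi⟩ | ⟨i, rfl, hi⟩)
    · refine ⟨fun j => if (j:ℕ) < 2*i then 1 else 0, ?_⟩
      have h2 : 2*i ≤ k := by omega
      have h3 := hn_ind (k := k) h2
      rw [h3, hn_even _ (by rw [h3]; exact ⟨i, by omega⟩), h3]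
      omega
    · refine ⟨fun j => if (j:ℕ) < 2*i+1 then 1 else 0, ?_⟩
      have h3 := hn_ind (k := k) hi
      rw [h3, hn_odd _ (by rw [h3]; exact Nat.not_even_iff.mpr (by omega)), h3]
      omega
end

section
/- Let k ≥ 3 and suppose c = (m_1, m_2) ∈ F_2^{2k} differs from a codeword (m, m·G_k) of L_k in exactly one coordinate. If w(m_1 + m_2) = 1 then the error can be corrected: the unique codeword at distance 1 from c is (m_1, m_1) or (m_2, m_2) according to whether w(m_1) is even or odd; if w(m_1 + m_2) = k − 1, it is (m_1, m̄_1) or (m̄_2, m_2) according to whether w(m_1) is odd or even. -/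
section Aux
open Finset

lemma sum_eq_norm {k : ℕ} (m : Fin k → ZMod 2) :
    ∑ i, m i = (hammingNorm m : ZMod 2) := by
  rw [hammingNorm]
  rw [← Finset.sum_filter_ne_zero]
  rw [Finset.sum_congr rfl (fun i hi => show m i = 1 by
    have h := (Finset.mem_filter.mp hi).2
    revert h; generalize m i = x; revert x; decide)]
  simp

lemma encL {k : ℕ} (m : Fin k → ZMod 2) :
    Matrix.vecMul m (G k) = fun j => (∑ i, m i) + m j := by
  funext j
  have h1 : Matrix.vecMul m (G k) j = ∑ i, (if i = j then 0 else m i) := by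
    simp only [Matrix.vecMul, dotProduct, G]
    exact Finset.sum_congr rfl (fun i _ => by split <;> simp [*])
  rw [h1]
  have h2 : ∀ i : Fin k, (if i = j then 0 else m i) = m i + (if i = j then m i else 0) := by
    intro i; split
    · rw [CharTwo.add_self_eq_zero]
    · simp
  rw [Finset.sum_congr rfl (fun i _ => h2 i), Finset.sum_add_distrib,
    Finset.sum_ite_eq' univ j (fun i => m i)]
  simp

lemma cast_dist {k : ℕ} (x y : Fin k → ZMod 2) :
    (hammingDist x y : ZMod 2) = (∑ i, x i) + ∑ i, y i := by
  rw [hammingDist_eq_hammingNorm, ← sum_eq_norm]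
  rw [← Finset.sum_add_distrib]
  exact Finset.sum_congr rfl (fun i _ => by simp [Pi.sub_apply, CharTwo.sub_eq_add])

lemma dist_compl {k : ℕ} (x y : Fin k → ZMod 2) :
    hammingDist x (fun i => y i + 1) + hammingDist x y = k := by
  rw [hammingDist, hammingDist]
  rw [show (Finset.univ.filter fun i => x i ≠ y i + 1) = Finset.univ.filter fun i => ¬ x i ≠ y i by
    apply Finset.filter_congr; intro i _
    constructor
    · intro h hne; apply h; revert hne; generalize x i = a; generalize y i = b; revert a b; decide
    · intro h; simp only [not_not] at h
      rw [h]; generalize y i = b; revert b; decide]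
  rw [Finset.filter_not, Finset.card_sdiff_of_subset (Finset.filter_subset _ _)]
  have := Finset.card_filter_le Finset.univ (fun i => x i ≠ y i)
  simp at this ⊢
  omega

lemma even_iff_sum {k : ℕ} (m : Fin k → ZMod 2) :
    Even (hammingNorm m) ↔ ∑ i, m i = 0 := by
  rw [sum_eq_norm, ZMod.natCast_eq_zero_iff]
  exact even_iff_two_dvd

lemma odd_iff_sum {k : ℕ} (m : Fin k → ZMod 2) :
    Odd (hammingNorm m) ↔ ∑ i, m i = 1 := by
  rw [← Nat.not_even_iff_odd, even_iff_sum]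
  generalize (∑ i, m i) = x; revert x; decide

lemma enc_even {k : ℕ} (m : Fin k → ZMod 2) (h : ∑ i, m i = 0) :
    Matrix.vecMul m (G k) = m := by
  rw [encL]; funext j; simp [h]

lemma enc_odd {k : ℕ} (m : Fin k → ZMod 2) (h : ∑ i, m i = 1) :
    Matrix.vecMul m (G k) = fun j => m j + 1 := by
  rw [encL]; funext j; rw [h, add_comm]

lemma dist_one_sum {k : ℕ} (x y : Fin k → ZMod 2) (h : hammingDist x y = 1) :
    ∑ i, y i = (∑ i, x i) + 1 := by
  have := cast_dist x y
  rw [h] at this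
  push_cast at this
  have h2 : (∑ i, x i) + ((∑ i, x i) + ∑ i, y i) = (∑ i, x i) + 1 := by rw [← this]
  rwa [← add_assoc, CharTwo.add_self_eq_zero, zero_add] at h2


end Aux

theorem stmt17 (k : ℕ) (hk : 3 ≤ k) (m₁ m₂ : Fin k → ZMod 2)
    (herr : ∃ m : Fin k → ZMod 2,
      hammingDist m₁ m + hammingDist m₂ (Matrix.vecMul m (G k)) = 1) :
    (hammingDist m₁ m₂ = 1 →
      (Even (hammingNorm m₁) →
        ∀ m : Fin k → ZMod 2,
          hammingDist m₁ m + hammingDist m₂ (Matrix.vecMul m (G k)) = 1 →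
          (m, Matrix.vecMul m (G k)) = (m₁, m₁)) ∧
      (Odd (hammingNorm m₁) →
        ∀ m : Fin k → ZMod 2,
          hammingDist m₁ m + hammingDist m₂ (Matrix.vecMul m (G k)) = 1 →
          (m, Matrix.vecMul m (G k)) = (m₂, m₂))) ∧
    (hammingDist m₁ m₂ = k - 1 →
      (Odd (hammingNorm m₁) →
        ∀ m : Fin k → ZMod 2,
          hammingDist m₁ m + hammingDist m₂ (Matrix.vecMul m (G k)) = 1 →
          (m, Matrix.vecMul m (G k)) = (m₁, fun i => m₁ i + 1)) ∧
      (Even (hammingNorm m₁) →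
        ∀ m : Fin k → ZMod 2,
          hammingDist m₁ m + hammingDist m₂ (Matrix.vecMul m (G k)) = 1 →
          (m, Matrix.vecMul m (G k)) = ((fun i => m₂ i + 1), m₂))) := by
  clear herr
  have hknz : (0:ℕ) < k := by omega
  have key0 : ∀ x m : Fin k → ZMod 2, hammingDist x m = 0 → x = m :=
    fun x m h => hammingDist_eq_zero.mp h
  constructor
  · intro hd
    constructor
    · -- d = 1, even
      rw [even_iff_sum] at *
      intro hpar m hm
      rcases (by omega :
          (hammingDist m₁ m = 0 ∧ hammingDist m₂ (Matrix.vecMul m (G k)) = 1) ∨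
          (hammingDist m₁ m = 1 ∧ hammingDist m₂ (Matrix.vecMul m (G k)) = 0)) with
        ⟨h1, h2⟩ | ⟨h1, h2⟩
      · obtain rfl := (key0 _ _ h1).symm
        rw [enc_even _ hpar]
      · exfalso
        have hsum : ∑ i, m i = 1 := by rw [dist_one_sum m₁ m h1, hpar, zero_add]
        have hm2 : m₂ = fun j => m j + 1 := by
          rw [key0 _ _ h2, enc_odd m hsum]
        have := dist_compl m₁ m
        rw [← hm2, hd, h1] at this
        omega
    · -- d = 1, odd
      rw [odd_iff_sum] at *
      intro hpar m hm
      rcases (by omega :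
          (hammingDist m₁ m = 0 ∧ hammingDist m₂ (Matrix.vecMul m (G k)) = 1) ∨
          (hammingDist m₁ m = 1 ∧ hammingDist m₂ (Matrix.vecMul m (G k)) = 0)) with
        ⟨h1, h2⟩ | ⟨h1, h2⟩
      · exfalso
        obtain rfl := (key0 _ _ h1).symm
        rw [enc_odd _ hpar] at h2
        have := dist_compl m₂ m
        rw [h2, hammingDist_comm m₂ _, hd] at this
        omega
      · have hsum : ∑ i, m i = 0 := by
          rw [dist_one_sum m₁ m h1, hpar, CharTwo.add_self_eq_zero]
        have hm2 : m₂ = m := by rw [key0 _ _ h2, enc_even m hsum]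
        rw [enc_even m hsum, hm2]
  · intro hd
    constructor
    · -- d = k-1, odd
      rw [odd_iff_sum] at *
      intro hpar m hm
      rcases (by omega :
          (hammingDist m₁ m = 0 ∧ hammingDist m₂ (Matrix.vecMul m (G k)) = 1) ∨
          (hammingDist m₁ m = 1 ∧ hammingDist m₂ (Matrix.vecMul m (G k)) = 0)) with
        ⟨h1, h2⟩ | ⟨h1, h2⟩
      · obtain rfl := (key0 _ _ h1).symm
        rw [enc_odd _ hpar]
      · exfalso
        have hsum : ∑ i, m i = 0 := by
          rw [dist_one_sum m₁ m h1, hpar, CharTwo.add_self_eq_zero]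
        have hm2 : m₂ = m := by rw [key0 _ _ h2, enc_even m hsum]
        rw [hm2, h1] at hd
        omega
    · -- d = k-1, even
      rw [even_iff_sum] at *
      intro hpar m hm
      rcases (by omega :
          (hammingDist m₁ m = 0 ∧ hammingDist m₂ (Matrix.vecMul m (G k)) = 1) ∨
          (hammingDist m₁ m = 1 ∧ hammingDist m₂ (Matrix.vecMul m (G k)) = 0)) with
        ⟨h1, h2⟩ | ⟨h1, h2⟩
      · exfalso
        obtain rfl := (key0 _ _ h1).symm
        rw [enc_even _ hpar] at h2
        rw [hammingDist_comm m₂ _, hd] at h2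
        omega
      · have hsum : ∑ i, m i = 1 := by rw [dist_one_sum m₁ m h1, hpar, zero_add]
        have hm2 : m₂ = fun j => m j + 1 := by rw [key0 _ _ h2, enc_odd m hsum]
        refine Prod.ext ?_ ?_
        · funext i
          show m i = m₂ i + 1
          rw [hm2]
          rw [add_assoc, CharTwo.add_self_eq_zero, add_zero]
        · show Matrix.vecMul m (G k) = m₂
          rw [enc_odd m hsum, hm2]
end
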